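/- With F(μ) = yᵀ(Σ_k μ_k K_k + λI)⁻¹ y + β‖μ‖² on the region {μ ∈ ℝ^p : μ ≥ 0}, the Hessian satisfies ∂²F/∂μ_j∂μ_k = 2αᵀK_k(K_μ + λI)⁻¹K_jα + 2βδ_{jk}, where K_μ = Σ_k μ_k K_k and α = (K_μ + λI)⁻¹y; consequently, for every u ∈ ℝ^p, uᵀ∇²F(μ)u = 2αᵀK_u(K_μ + λI)⁻¹K_uα + 2β‖u‖² ≥ 0, where K_u = Σ_k u_k K_k, so F is convex on the nonnegative orthant. -/

import Mathlib

open scoped Matrix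

namespace Stmt3Aux

open Matrix

attribute [local instance] Matrix.linftyOpNormedRing Matrix.linftyOpNormedAlgebra

variable {m p : ℕ}

noncomputable def L0 (K : Fin p → Matrix (Fin m) (Fin m) ℝ) :
    (Fin p → ℝ) →L[ℝ] Matrix (Fin m) (Fin m) ℝ :=
  LinearMap.toContinuousLinearMap
    { toFun := fun v => ∑ i, v i • K i
      map_add' := by intro a b; simp [add_smul, Finset.sum_add_distrib]
      map_smul' := by intro c v; simp [smul_smul, Finset.smul_sum] }

@[simp] lemma L0_apply (K : Fin p → Matrix (Fin m) (Fin m) ℝ) (v : Fin p → ℝ) :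
    L0 K v = ∑ i, v i • K i := rfl

noncomputable def Q (y : Fin m → ℝ) : Matrix (Fin m) (Fin m) ℝ →L[ℝ] ℝ :=
  LinearMap.toContinuousLinearMap
    { toFun := fun M => y ⬝ᵥ M.mulVec y
      map_add' := by intro a b; simp [Matrix.add_mulVec]
      map_smul' := by intro c M; simp [Matrix.smul_mulVec] }

@[simp] lemma Q_apply (y : Fin m → ℝ) (M : Matrix (Fin m) (Fin m) ℝ) :
    Q y M = y ⬝ᵥ M.mulVec y := rfl

noncomputable abbrev Am (K : Fin p → Matrix (Fin m) (Fin m) ℝ) (lam : ℝ) (ν : Fin p → ℝ) :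
    Matrix (Fin m) (Fin m) ℝ := (∑ i, ν i • K i) + lam • 1

lemma hasFDerivAt_Ginv (K : Fin p → Matrix (Fin m) (Fin m) ℝ) (lam : ℝ) (ν : Fin p → ℝ)
    (hu : IsUnit (Am K lam ν)) :
    HasFDerivAt (fun ν => Ring.inverse (Am K lam ν))
      ((-(ContinuousLinearMap.mulLeftRight ℝ _ (Ring.inverse (Am K lam ν))
        (Ring.inverse (Am K lam ν)))).comp (L0 K)) ν := by
  have hA : HasFDerivAt (fun ν => Am K lam ν) (L0 K) ν := by
    exact (L0 K).hasFDerivAt.add_const (lam • (1:Matrix (Fin m) (Fin m) ℝ))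
  have h1 := (hasFDerivAt_ringInverse (𝕜 := ℝ) hu.unit)
  rw [hu.unit_spec] at h1
  have h2 : Ring.inverse (Am K lam ν) = ((hu.unit⁻¹ : _ˣ) : Matrix (Fin m) (Fin m) ℝ) := by
    conv_lhs => rw [← hu.unit_spec]
    exact Ring.inverse_unit hu.unit
  rw [← h2] at h1
  exact h1.comp ν hA

noncomputable def P (β : ℝ) (ν : Fin p → ℝ) : (Fin p → ℝ) →L[ℝ] ℝ :=
  ∑ i, (β * (2 * ν i)) • (ContinuousLinearMap.proj i : (Fin p → ℝ) →L[ℝ] ℝ)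

lemma hasFDerivAt_poly (β : ℝ) (ν : Fin p → ℝ) :
    HasFDerivAt (fun ν : Fin p → ℝ => β * ∑ i, ν i ^ 2) (P β ν) ν := by
  have h : ∀ i : Fin p, HasFDerivAt (fun ν : Fin p → ℝ => β * ν i ^ 2)
      ((β * (2 * ν i)) • (ContinuousLinearMap.proj i : (Fin p → ℝ) →L[ℝ] ℝ)) ν := by
    intro i
    have h1 : HasFDerivAt (fun ν : Fin p → ℝ => ν i)
        (ContinuousLinearMap.proj i : (Fin p → ℝ) →L[ℝ] ℝ) ν :=
      (ContinuousLinearMap.proj i : (Fin p → ℝ) →L[ℝ] ℝ).hasFDerivAt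
    have h2 : HasDerivAt (fun t : ℝ => t ^ 2) (2 * ν i) (ν i) := by
      simpa using hasDerivAt_pow 2 (ν i)
    have h3 := h2.comp_hasFDerivAt ν h1
    have := h3.const_mul β
    convert! this using 1
    ext w
    simp only [ContinuousLinearMap.smul_apply, ContinuousLinearMap.proj_apply, smul_eq_mul]
    ring
  have := HasFDerivAt.fun_sum (fun i (_ : i ∈ Finset.univ) => h i)
  rw [P]
  convert! this using 1
  ext ν'
  simp [Finset.mul_sum]

noncomputable def Fder (K : Fin p → Matrix (Fin m) (Fin m) ℝ) (lam : ℝ) (y : Fin m → ℝ)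
    (β : ℝ) (ν : Fin p → ℝ) : (Fin p → ℝ) →L[ℝ] ℝ :=
  (Q y).comp ((-(ContinuousLinearMap.mulLeftRight ℝ _ (Ring.inverse (Am K lam ν))
        (Ring.inverse (Am K lam ν)))).comp (L0 K)) + P β ν

lemma hasFDerivAt_F (K : Fin p → Matrix (Fin m) (Fin m) ℝ) (lam : ℝ) (y : Fin m → ℝ)
    (β : ℝ) (ν : Fin p → ℝ) (hu : IsUnit (Am K lam ν)) :
    HasFDerivAt (fun ν => y ⬝ᵥ (Am K lam ν)⁻¹.mulVec y + β * ∑ i, ν i ^ 2)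
      (Fder K lam y β ν) ν := by
  have h1 : HasFDerivAt (fun ν => y ⬝ᵥ (Am K lam ν)⁻¹.mulVec y)
      ((Q y).comp ((-(ContinuousLinearMap.mulLeftRight ℝ _ (Ring.inverse (Am K lam ν))
        (Ring.inverse (Am K lam ν)))).comp (L0 K))) ν := by
    have := (Q y).hasFDerivAt.comp ν (hasFDerivAt_Ginv K lam ν hu)
    simp only [Matrix.nonsing_inv_eq_ringInverse, Function.comp_def] at this ⊢
    exact this
  exact h1.add (hasFDerivAt_poly β ν)

lemma Fder_apply_single (K : Fin p → Matrix (Fin m) (Fin m) ℝ) (lam : ℝ) (y : Fin m → ℝ)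
    (β : ℝ) (ν : Fin p → ℝ) (j : Fin p) :
    Fder K lam y β ν (Pi.single j 1) =
      -(y ⬝ᵥ ((Ring.inverse (Am K lam ν)) * K j * (Ring.inverse (Am K lam ν))).mulVec y)
        + β * (2 * ν j) := by
  have hL : L0 K (Pi.single j 1) = K j := by
    simp [Pi.single_apply, ite_smul]
  simp [Fder, P, hL, Pi.single_apply, Matrix.mul_assoc]
  erw [ContinuousLinearMap.comp_apply, ContinuousLinearMap.comp_apply,
    ContinuousLinearMap.neg_apply, ContinuousLinearMap.mulLeftRight_apply, hL]
  simp [Matrix.mul_assoc, Matrix.neg_mulVec]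

lemma second_deriv (K : Fin p → Matrix (Fin m) (Fin m) ℝ) (lam : ℝ) (y : Fin m → ℝ)
    (β : ℝ) (μ : Fin p → ℝ) (hu : IsUnit (Am K lam μ)) (j k : Fin p) :
    fderiv ℝ (fun ν => fderiv ℝ
        (fun ν => y ⬝ᵥ (Am K lam ν)⁻¹.mulVec y + β * ∑ i, ν i ^ 2) ν (Pi.single j 1))
      μ (Pi.single k 1) =
    y ⬝ᵥ ((Ring.inverse (Am K lam μ)) * K j * (Ring.inverse (Am K lam μ)) * K k
        * (Ring.inverse (Am K lam μ))).mulVec y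
    + y ⬝ᵥ ((Ring.inverse (Am K lam μ)) * K k * (Ring.inverse (Am K lam μ)) * K j
        * (Ring.inverse (Am K lam μ))).mulVec y
    + β * (2 * (if j = k then 1 else 0)) := by
  have hUopen : IsOpen {ν : Fin p → ℝ | IsUnit (Am K lam ν)} := by
    have hc : Continuous (fun ν : Fin p → ℝ => Am K lam ν) :=
      ((L0 K).continuous.add continuous_const)
    exact Units.isOpen.preimage hc
  have hev : (fun ν => fderiv ℝ
        (fun ν => y ⬝ᵥ (Am K lam ν)⁻¹.mulVec y + β * ∑ i, ν i ^ 2) ν (Pi.single j 1))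
      =ᶠ[nhds μ] (fun ν =>
        -(y ⬝ᵥ ((Ring.inverse (Am K lam ν)) * K j * (Ring.inverse (Am K lam ν))).mulVec y)
        + β * (2 * ν j)) := by
    filter_upwards [hUopen.mem_nhds hu] with ν hν
    rw [(hasFDerivAt_F K lam y β ν hν).fderiv, Fder_apply_single]
  rw [hev.fderiv_eq]
  -- now compute the derivative of the explicit function
  set G := Ring.inverse (Am K lam μ) with hG
  set D := ((-(ContinuousLinearMap.mulLeftRight ℝ _ G G)).comp (L0 K)) with hD
  have hGd : HasFDerivAt (fun ν => Ring.inverse (Am K lam ν)) D μ :=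
    hasFDerivAt_Ginv K lam μ hu
  have h1 : HasFDerivAt (fun ν => Ring.inverse (Am K lam ν) * K j)
      (MulOpposite.op (K j) • D) μ := hGd.mul_const' (K j)
  have h2 := h1.fun_mul' hGd
  have h3 := ((Q y).hasFDerivAt.comp μ h2).fun_neg
  have hp : HasFDerivAt (fun ν : Fin p → ℝ => β * (2 * ν j))
      ((β * 2) • (ContinuousLinearMap.proj j : (Fin p → ℝ) →L[ℝ] ℝ)) μ := by
    have := ((ContinuousLinearMap.proj j : (Fin p → ℝ) →L[ℝ] ℝ).hasFDerivAt
        (x := μ)).const_mul (2:ℝ) |>.const_mul β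
    simpa [smul_smul, mul_assoc] using this
  have htot := h3.fun_add hp
  simp only [Function.comp_def, Q_apply] at htot
  rw [htot.fderiv]
  have hL : (∑ i, (Pi.single k 1 : Fin p → ℝ) i • K i) = K k := by
    simp [Pi.single_apply, ite_smul]
  have hDk : D (Pi.single k 1) = -(G * K k * G) := by
    rw [hD]
    erw [ContinuousLinearMap.comp_apply, ContinuousLinearMap.neg_apply,
      ContinuousLinearMap.mulLeftRight_apply, L0_apply, hL]
  erw [ContinuousLinearMap.add_apply, ContinuousLinearMap.neg_apply,
    ContinuousLinearMap.comp_apply]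
  simp only [ContinuousLinearMap.add_apply, ContinuousLinearMap.neg_apply,
    ContinuousLinearMap.comp_apply, op_smul_eq_mul, ContinuousLinearMap.smul_apply,
    ContinuousLinearMap.smulRight_apply, ContinuousLinearMap.proj_apply,
    Q_apply, smul_eq_mul, hDk]
  erw [Q_apply]
  rw [← hG]
  rw [show (Pi.single k 1 : Fin p → ℝ) j = (if j = k then (1:ℝ) else 0) from by simp [Pi.single_apply]]
  simp only [Matrix.add_mulVec, Matrix.neg_mulVec, dotProduct_add, dotProduct_neg,
    Matrix.mul_neg, Matrix.neg_mul, neg_neg, Matrix.mul_assoc]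
  ring

-- algebra helpers
lemma dot_symm_three {G M : Matrix (Fin m) (Fin m) ℝ} (hG : Gᵀ = G) (y : Fin m → ℝ) :
    y ⬝ᵥ (G * M * G).mulVec y = (G.mulVec y) ⬝ᵥ M.mulVec (G.mulVec y) := by
  rw [← Matrix.mulVec_mulVec, ← Matrix.mulVec_mulVec, Matrix.dotProduct_mulVec,
    ← Matrix.mulVec_transpose, hG]

lemma dot_transpose (M : Matrix (Fin m) (Fin m) ℝ) (v : Fin m → ℝ) :
    v ⬝ᵥ M.mulVec v = v ⬝ᵥ Mᵀ.mulVec v := by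
  rw [Matrix.dotProduct_mulVec, ← Matrix.mulVec_transpose, dotProduct_comm]

lemma symm_of_posSemidef {M : Matrix (Fin m) (Fin m) ℝ} (h : M.PosSemidef) : Mᵀ = M := h.1

example (M : Matrix (Fin m) (Fin m) ℝ) (h : M.PosSemidef) (x : Fin m → ℝ) :
    0 ≤ x ⬝ᵥ M.mulVec x := by simpa using h.dotProduct_mulVec_nonneg x

lemma posSemidef_sum_smul (K : Fin p → Matrix (Fin m) (Fin m) ℝ)
    (hK : ∀ k, (K k).PosSemidef) (ν : Fin p → ℝ) (hν : 0 ≤ ν) :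
    (∑ i, ν i • K i).PosSemidef := by
  refine Finset.sum_induction _ (fun M : Matrix (Fin m) (Fin m) ℝ => M.PosSemidef)
    (fun a b ha hb => ha.add hb) Matrix.PosSemidef.zero ?_
  intro i _
  refine Matrix.PosSemidef.of_dotProduct_mulVec_nonneg ?_ ?_
  · rw [Matrix.IsHermitian, Matrix.conjTranspose_eq_transpose_of_trivial, Matrix.transpose_smul,
      show (K i)ᵀ = K i from (hK i).1]
  · intro x
    rw [Matrix.smul_mulVec, dotProduct_smul]
    exact smul_nonneg (hν i) ((hK i).dotProduct_mulVec_nonneg x)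

lemma posDef_Am (K : Fin p → Matrix (Fin m) (Fin m) ℝ)
    (hK : ∀ k, (K k).PosSemidef) (lam : ℝ) (hlam : 0 < lam) (ν : Fin p → ℝ) (hν : 0 ≤ ν) :
    (Am K lam ν).PosDef := by
  refine Matrix.PosDef.posSemidef_add (posSemidef_sum_smul K hK ν hν) ?_
  refine Matrix.PosDef.of_dotProduct_mulVec_pos ?_ ?_
  · rw [Matrix.IsHermitian, Matrix.conjTranspose_eq_transpose_of_trivial, Matrix.transpose_smul,
      Matrix.transpose_one]
  · intro x hx
    rw [star_trivial, Matrix.smul_mulVec, dotProduct_smul, Matrix.one_mulVec]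
    refine smul_pos hlam ?_
    have h1 : (0:ℝ) ≤ x ⬝ᵥ x := by
      simpa using Matrix.PosSemidef.one (n := Fin m) (R := ℝ) |>.dotProduct_mulVec_nonneg x
    rcases h1.lt_or_eq with h | h
    · exact h
    · exact absurd ((dotProduct_self_eq_zero).1 h.symm) hx

lemma lower_bound {M : Matrix (Fin m) (Fin m) ℝ} (hM : M.PosDef) (y x : Fin m → ℝ) :
    2 * (x ⬝ᵥ y) - x ⬝ᵥ M.mulVec x ≤ y ⬝ᵥ M⁻¹.mulVec y := by
  have hdet : IsUnit M.det := hM.det_pos.ne'.isUnit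
  have hsymm : Mᵀ = M := hM.1
  have hMx : M *ᵥ (M⁻¹ *ᵥ y) = y := by
    rw [Matrix.mulVec_mulVec, Matrix.mul_nonsing_inv _ hdet, Matrix.one_mulVec]
  have hswap : ∀ a b : Fin m → ℝ, a ⬝ᵥ M *ᵥ b = b ⬝ᵥ M *ᵥ a := by
    intro a b
    rw [Matrix.dotProduct_mulVec, ← Matrix.mulVec_transpose, hsymm, dotProduct_comm]
  have h0 : 0 ≤ (x - M⁻¹ *ᵥ y) ⬝ᵥ M *ᵥ (x - M⁻¹ *ᵥ y) := by
    simpa using hM.posSemidef.dotProduct_mulVec_nonneg (x - M⁻¹ *ᵥ y)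
  rw [Matrix.mulVec_sub, hMx, sub_dotProduct, dotProduct_sub, dotProduct_sub] at h0
  have e1 : (M⁻¹ *ᵥ y) ⬝ᵥ M *ᵥ x = x ⬝ᵥ y := by rw [hswap, hMx]
  have e2 : (M⁻¹ *ᵥ y) ⬝ᵥ y = y ⬝ᵥ M⁻¹ *ᵥ y := dotProduct_comm _ _
  rw [e1, e2] at h0
  linarith

lemma value_opt {M : Matrix (Fin m) (Fin m) ℝ} (hM : M.PosDef) (y : Fin m → ℝ) :
    y ⬝ᵥ M⁻¹.mulVec y =
      2 * ((M⁻¹ *ᵥ y) ⬝ᵥ y) - (M⁻¹ *ᵥ y) ⬝ᵥ M *ᵥ (M⁻¹ *ᵥ y) := by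
  have hdet : IsUnit M.det := hM.det_pos.ne'.isUnit
  have hMx : M *ᵥ (M⁻¹ *ᵥ y) = y := by
    rw [Matrix.mulVec_mulVec, Matrix.mul_nonsing_inv _ hdet, Matrix.one_mulVec]
  rw [hMx, dotProduct_comm]
  ring

lemma Am_combo (K : Fin p → Matrix (Fin m) (Fin m) ℝ) (lam : ℝ) (x z : Fin p → ℝ)
    (a b : ℝ) (hab : a + b = 1) :
    Am K lam (a • x + b • z) = a • Am K lam x + b • Am K lam z := by
  have h1 : (∑ i, (a • x + b • z) i • K i)
      = a • (∑ i, x i • K i) + b • (∑ i, z i • K i) := by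
    rw [Finset.smul_sum, Finset.smul_sum, ← Finset.sum_add_distrib]
    refine Finset.sum_congr rfl fun i _ => ?_
    simp [add_smul, smul_smul]
  show (∑ i, (a • x + b • z) i • K i) + lam • 1 = _
  rw [h1, smul_add, smul_add]
  have h2 : a • (lam • (1 : Matrix (Fin m) (Fin m) ℝ)) + b • (lam • 1) = lam • 1 := by
    rw [← add_smul, hab, one_smul]
  rw [show ∀ A B C D : Matrix (Fin m) (Fin m) ℝ, A + B + (C + D) = A + C + (B + D) from
    fun A B C D => by abel, h2]

lemma dot_combo (M N : Matrix (Fin m) (Fin m) ℝ) (a b : ℝ) (x : Fin m → ℝ) :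
    x ⬝ᵥ (a • M + b • N) *ᵥ x = a * (x ⬝ᵥ M *ᵥ x) + b * (x ⬝ᵥ N *ᵥ x) := by
  simp [Matrix.add_mulVec, Matrix.smul_mulVec, dotProduct_smul, smul_eq_mul]

lemma convex_orth : Convex ℝ {ν : Fin p → ℝ | 0 ≤ ν} := by
  intro x hx z hz a b ha hb hab
  intro i
  have := hx i
  have := hz i
  simp only [Pi.add_apply, Pi.smul_apply, smul_eq_mul, Pi.zero_apply] at *
  exact add_nonneg (mul_nonneg ha (hx i)) (mul_nonneg hb (hz i))

lemma convexOn_g (K : Fin p → Matrix (Fin m) (Fin m) ℝ) (hK : ∀ k, (K k).PosSemidef)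
    (lam : ℝ) (hlam : 0 < lam) (y : Fin m → ℝ) :
    ConvexOn ℝ {ν : Fin p → ℝ | 0 ≤ ν} (fun ν => y ⬝ᵥ (Am K lam ν)⁻¹.mulVec y) := by
  refine ⟨convex_orth, ?_⟩
  intro ν₁ h1 ν₂ h2 a b ha hb hab
  have hmem : a • ν₁ + b • ν₂ ∈ {ν : Fin p → ℝ | 0 ≤ ν} :=
    convex_orth h1 h2 ha hb hab
  set νs := a • ν₁ + b • ν₂ with hνs
  have hPDs := posDef_Am K hK lam hlam νs hmem
  have hPD1 := posDef_Am K hK lam hlam ν₁ h1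
  have hPD2 := posDef_Am K hK lam hlam ν₂ h2
  set xs := (Am K lam νs)⁻¹ *ᵥ y with hxs
  have hval := value_opt hPDs y
  have hcombo : Am K lam νs = a • Am K lam ν₁ + b • Am K lam ν₂ := Am_combo K lam ν₁ ν₂ a b hab
  have l1 : 2 * (xs ⬝ᵥ y) - xs ⬝ᵥ (Am K lam ν₁) *ᵥ xs ≤ y ⬝ᵥ (Am K lam ν₁)⁻¹ *ᵥ y :=
    lower_bound hPD1 y xs
  have l2 : 2 * (xs ⬝ᵥ y) - xs ⬝ᵥ (Am K lam ν₂) *ᵥ xs ≤ y ⬝ᵥ (Am K lam ν₂)⁻¹ *ᵥ y :=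
    lower_bound hPD2 y xs
  have hq : xs ⬝ᵥ (Am K lam νs) *ᵥ xs
      = a * (xs ⬝ᵥ (Am K lam ν₁) *ᵥ xs) + b * (xs ⬝ᵥ (Am K lam ν₂) *ᵥ xs) := by
    rw [hcombo]; exact dot_combo _ _ a b xs
  simp only [smul_eq_mul]
  have step : y ⬝ᵥ (Am K lam νs)⁻¹ *ᵥ y
      = a * (2 * (xs ⬝ᵥ y) - xs ⬝ᵥ (Am K lam ν₁) *ᵥ xs)
        + b * (2 * (xs ⬝ᵥ y) - xs ⬝ᵥ (Am K lam ν₂) *ᵥ xs) := by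
    rw [hval, hq]
    linear_combination (-(2 * ((Am K lam νs)⁻¹ *ᵥ y ⬝ᵥ y))) * hab
  rw [step]
  exact add_le_add (mul_le_mul_of_nonneg_left l1 ha) (mul_le_mul_of_nonneg_left l2 hb)

lemma convexOn_poly (β : ℝ) (hβ : 0 < β) :
    ConvexOn ℝ {ν : Fin p → ℝ | 0 ≤ ν} (fun ν => β * ∑ i, ν i ^ 2) := by
  refine ⟨convex_orth, ?_⟩
  intro ν₁ _ ν₂ _ a b ha hb hab
  simp only [smul_eq_mul, Pi.add_apply, Pi.smul_apply]
  rw [← mul_assoc, ← mul_assoc, mul_comm a β, mul_comm b β, mul_assoc, mul_assoc,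
    ← mul_add]
  refine mul_le_mul_of_nonneg_left ?_ hβ.le
  calc ∑ i, (a * ν₁ i + b * ν₂ i) ^ 2
      ≤ ∑ i, (a * ν₁ i ^ 2 + b * ν₂ i ^ 2) := by
        refine Finset.sum_le_sum fun i _ => ?_
        nlinarith [mul_nonneg ha hb, sq_nonneg (ν₁ i - ν₂ i)]
    _ = a * ∑ i, ν₁ i ^ 2 + b * ∑ i, ν₂ i ^ 2 := by
        rw [Finset.sum_add_distrib, Finset.mul_sum, Finset.mul_sum]

lemma quad_identity (K : Fin p → Matrix (Fin m) (Fin m) ℝ) (G : Matrix (Fin m) (Fin m) ℝ)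
    (α : Fin m → ℝ) (β : ℝ) (u : Fin p → ℝ) :
    (∑ j, ∑ k, u j * u k *
        (2 * (α ⬝ᵥ (K k * G * K j).mulVec α) + 2 * β * (if j = k then 1 else 0)))
      = 2 * (α ⬝ᵥ ((∑ i, u i • K i) * G * (∑ i, u i • K i)).mulVec α)
        + 2 * β * ∑ i, u i ^ 2 := by
  have hexp : (∑ i, u i • K i) * G * (∑ i, u i • K i)
      = ∑ j, ∑ k, (u j * u k) • (K k * G * K j) := by
    simp only [Finset.sum_mul, Finset.mul_sum, smul_mul_assoc, mul_smul_comm, smul_smul,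
      Finset.smul_sum]
  have hA : α ⬝ᵥ ((∑ i, u i • K i) * G * (∑ i, u i • K i)).mulVec α
      = ∑ j, ∑ k, (u j * u k) * (α ⬝ᵥ (K k * G * K j).mulVec α) := by
    rw [show α ⬝ᵥ ((∑ i, u i • K i) * G * (∑ i, u i • K i)).mulVec α
        = Q α ((∑ i, u i • K i) * G * (∑ i, u i • K i)) from rfl, hexp, map_sum]
    refine Finset.sum_congr rfl fun j _ => ?_
    rw [map_sum]
    refine Finset.sum_congr rfl fun k _ => ?_
    rw [_root_.map_smul, smul_eq_mul, Q_apply]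
  have hB : ∀ j, (∑ k, u j * u k * (2 * β * (if j = k then 1 else 0))) = 2 * β * u j ^ 2 := by
    intro j
    rw [Finset.sum_eq_single j]
    · simp; ring
    · intro k _ hk
      rw [if_neg (fun h => hk h.symm)]
      ring
    · simp
  simp only [mul_add]
  rw [Finset.sum_congr rfl fun j (_ : j ∈ Finset.univ) => Finset.sum_add_distrib,
    Finset.sum_add_distrib]
  congr 1
  · rw [hA, Finset.mul_sum]
    refine Finset.sum_congr rfl fun j _ => ?_
    rw [Finset.mul_sum]
    refine Finset.sum_congr rfl fun k _ => by ring
  · rw [Finset.sum_congr rfl fun j _ => hB j, ← Finset.mul_sum]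

lemma quad_nonneg {G : Matrix (Fin m) (Fin m) ℝ} (hG : G.PosSemidef)
    {S : Matrix (Fin m) (Fin m) ℝ} (hS : Sᵀ = S) (α : Fin m → ℝ) :
    0 ≤ α ⬝ᵥ (S * G * S).mulVec α := by
  rw [dot_symm_three hS α]
  simpa using hG.dotProduct_mulVec_nonneg (S *ᵥ α)


end Stmt3Aux

/-- Hessian formula and convexity of
`F(μ) = yᵀ(Σ μ_k K_k + λI)⁻¹y + β‖μ‖²` on the nonnegative orthant. -/
theorem stmt3 {m p : ℕ} (y : Fin m → ℝ) (K : Fin p → Matrix (Fin m) (Fin m) ℝ)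
    (hK : ∀ k, (K k).PosSemidef) (lam β : ℝ) (hlam : 0 < lam) (hβ : 0 < β) :
    let F : (Fin p → ℝ) → ℝ := fun μ =>
      y ⬝ᵥ ((∑ i, μ i • K i) + lam • 1)⁻¹.mulVec y + β * ∑ i, μ i ^ 2
    ∀ μ : Fin p → ℝ, 0 ≤ μ →
      let α := ((∑ i, μ i • K i) + lam • 1)⁻¹.mulVec y
      (∀ j k : Fin p,
          fderiv ℝ (fun ν => fderiv ℝ F ν (Pi.single j 1)) μ (Pi.single k 1) =
            2 * (α ⬝ᵥ (K k * ((∑ i, μ i • K i) + lam • 1)⁻¹ * K j).mulVec α) +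
              2 * β * (if j = k then 1 else 0)) ∧
      (∀ u : Fin p → ℝ,
          (∑ j, ∑ k, u j * u k *
              fderiv ℝ (fun ν => fderiv ℝ F ν (Pi.single j 1)) μ (Pi.single k 1)) =
            2 * (α ⬝ᵥ ((∑ i, u i • K i) * ((∑ i, μ i • K i) + lam • 1)⁻¹ *
                (∑ i, u i • K i)).mulVec α) + 2 * β * ∑ i, u i ^ 2 ∧
          0 ≤ 2 * (α ⬝ᵥ ((∑ i, u i • K i) * ((∑ i, μ i • K i) + lam • 1)⁻¹ *
                (∑ i, u i • K i)).mulVec α) + 2 * β * ∑ i, u i ^ 2) ∧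
      ConvexOn ℝ {ν : Fin p → ℝ | 0 ≤ ν} F := by
  intro F μ hμ α
  have hPD := Stmt3Aux.posDef_Am K hK lam hlam μ hμ
  have hu : IsUnit (Stmt3Aux.Am K lam μ) := hPD.isUnit
  have hAsymm : (Stmt3Aux.Am K lam μ)ᵀ = Stmt3Aux.Am K lam μ := hPD.1
  have hGs : ((Stmt3Aux.Am K lam μ)⁻¹)ᵀ = (Stmt3Aux.Am K lam μ)⁻¹ := by
    rw [Matrix.transpose_nonsing_inv, hAsymm]
  have hKT : ∀ i, (K i)ᵀ = K i := fun i => (hK i).1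
  have part1 : ∀ j k : Fin p,
      fderiv ℝ (fun ν => fderiv ℝ F ν (Pi.single j 1)) μ (Pi.single k 1) =
        2 * (α ⬝ᵥ (K k * ((∑ i, μ i • K i) + lam • 1)⁻¹ * K j).mulVec α) +
          2 * β * (if j = k then 1 else 0) := by
    intro j k
    refine (Stmt3Aux.second_deriv K lam y β μ hu j k).trans ?_
    rw [← Matrix.nonsing_inv_eq_ringInverse]
    have t1 : y ⬝ᵥ ((Stmt3Aux.Am K lam μ)⁻¹ * K j * (Stmt3Aux.Am K lam μ)⁻¹ * K k * (Stmt3Aux.Am K lam μ)⁻¹).mulVec y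
        = α ⬝ᵥ (K k * (Stmt3Aux.Am K lam μ)⁻¹ * K j).mulVec α := by
      have h1 : (Stmt3Aux.Am K lam μ)⁻¹ * K j * (Stmt3Aux.Am K lam μ)⁻¹ * K k * (Stmt3Aux.Am K lam μ)⁻¹
          = (Stmt3Aux.Am K lam μ)⁻¹ * (K j * (Stmt3Aux.Am K lam μ)⁻¹ * K k) * (Stmt3Aux.Am K lam μ)⁻¹ := by
        simp only [Matrix.mul_assoc]
      rw [h1, Stmt3Aux.dot_symm_three hGs y, Stmt3Aux.dot_transpose, Matrix.transpose_mul, Matrix.transpose_mul,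
        hKT, hKT, hGs]
      simp only [Matrix.mul_assoc]
      rfl
    have t2 : y ⬝ᵥ ((Stmt3Aux.Am K lam μ)⁻¹ * K k * (Stmt3Aux.Am K lam μ)⁻¹ * K j * (Stmt3Aux.Am K lam μ)⁻¹).mulVec y
        = α ⬝ᵥ (K k * (Stmt3Aux.Am K lam μ)⁻¹ * K j).mulVec α := by
      have h1 : (Stmt3Aux.Am K lam μ)⁻¹ * K k * (Stmt3Aux.Am K lam μ)⁻¹ * K j * (Stmt3Aux.Am K lam μ)⁻¹
          = (Stmt3Aux.Am K lam μ)⁻¹ * (K k * (Stmt3Aux.Am K lam μ)⁻¹ * K j) * (Stmt3Aux.Am K lam μ)⁻¹ := by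
        simp only [Matrix.mul_assoc]
      rw [h1, Stmt3Aux.dot_symm_three hGs y]
    rw [t1, t2]
    ring
  refine ⟨part1, fun u => ⟨?_, ?_⟩, ?_⟩
  · refine (Finset.sum_congr rfl fun j _ => Finset.sum_congr rfl fun k _ => by
      rw [part1 j k]).trans ?_
    exact Stmt3Aux.quad_identity K ((Stmt3Aux.Am K lam μ)⁻¹) α β u
  · have hSuT : (∑ i, u i • K i)ᵀ = ∑ i, u i • K i := by
      rw [Matrix.transpose_sum]
      exact Finset.sum_congr rfl fun i _ => by rw [Matrix.transpose_smul, hKT i]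
    have h1 := Stmt3Aux.quad_nonneg hPD.inv.posSemidef hSuT α
    have h2 : (0:ℝ) ≤ ∑ i, u i ^ 2 := Finset.sum_nonneg fun i _ => sq_nonneg _
    have h3 : (0:ℝ) ≤ 2 * β * ∑ i, u i ^ 2 := by positivity
    linarith
  · exact (Stmt3Aux.convexOn_g K hK lam hlam y).add (Stmt3Aux.convexOn_poly β hβ)
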